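/- Let R be a decomposable norm on ℝ^p, i.e., R(u) = R(u_S) + R(u_{S^c}) for every index set S and every u, where u_S is u restricted to S (zero outside S). Suppose β* is supported on S (β*_{S^c} = 0) and v ∈ ℝ^p satisfies R(v)/2 + R(β*) − R(β* + v) ≥ 0. Then R(v_{S^c}) ≤ 3R(v_S). -/
import Mathlib


/-- For a decomposable norm `R`, if `β*` is supported on `S` and `v` lies in the LASSO
cone, then `R(v_{S^c}) ≤ 3R(v_S)`. -/
theorem decomposable_cone_inclusion (p : ℕ) (R : (Fin p → ℝ) → ℝ)
    (hR_nonneg : ∀ u, 0 ≤ R u)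
    (hR_zero : ∀ u, R u = 0 ↔ u = 0)
    (hR_add : ∀ u v, R (u + v) ≤ R u + R v)
    (hR_smul : ∀ (c : ℝ) (u), R (c • u) = |c| * R u)
    (hdec : ∀ (S : Finset (Fin p)) (u : Fin p → ℝ),
      R u = R (fun i => if i ∈ S then u i else 0) + R (fun i => if i ∈ S then 0 else u i))
    (S : Finset (Fin p)) (βstar v : Fin p → ℝ)
    (hsupp : ∀ i ∉ S, βstar i = 0)
    (hv : 0 ≤ R v / 2 + R βstar - R (βstar + v)) :
    R (fun i => if i ∈ S then 0 else v i) ≤ 3 * R (fun i => if i ∈ S then v i else 0) := by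
  set vS : Fin p → ℝ := fun i => if i ∈ S then v i else 0 with hvS
  set vSc : Fin p → ℝ := fun i => if i ∈ S then 0 else v i with hvSc
  have hsplit : R v = R vS + R vSc := hdec S v
  -- R(β* + vSc) = R(β*) + R(vSc) by decomposability
  have h1 : (fun i => if i ∈ S then (βstar + vSc) i else 0) = βstar := by
    funext i
    by_cases h : i ∈ S <;> simp [hvSc, h, hsupp i, Pi.add_apply]
  have h2 : (fun i => if i ∈ S then 0 else (βstar + vSc) i) = vSc := by
    funext i
    by_cases h : i ∈ S
    · simp [hvSc, h]
    · simp [hvSc, h, hsupp i h]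
  have hdec2 : R (βstar + vSc) = R βstar + R vSc := by
    have := hdec S (βstar + vSc)
    rw [h1, h2] at this; exact this
  -- R(β* + vSc) ≤ R(β* + v) + R(vS)
  have hneg : R (-vS) = R vS := by
    have := hR_smul (-1) vS
    simpa using this
  have htri : R (βstar + vSc) ≤ R (βstar + v) + R vS := by
    have heq : βstar + vSc = (βstar + v) + (-vS) := by
      funext i
      by_cases h : i ∈ S <;> simp [hvS, hvSc, h] <;> ring
    calc R (βstar + vSc) = R ((βstar + v) + (-vS)) := by rw [heq]
      _ ≤ R (βstar + v) + R (-vS) := hR_add _ _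
      _ = R (βstar + v) + R vS := by rw [hneg]
  linarith [hdec2, htri, hsplit, hv]
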